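/- Let Λ be a non-ordinary numerical semigroup with conductor c = c(Λ) and jump u = u(Λ). If σ is a right generator of Λ with σ ≥ c + u, then σ is not a strong generator of Λ. -/
import Mathlib


open Pointwise

namespace NumSgpPaper

/-- `S` is a numerical semigroup: an additive submonoid of ℕ with finite complement. -/
structure IsNumSgp (S : Set ℕ) : Prop where
  zero_mem : 0 ∈ S
  add_mem : ∀ ⦃a b : ℕ⦄, a ∈ S → b ∈ S → a + b ∈ S
  cofinite : Sᶜ.Finite

/-- The Frobenius number: the largest gap of `S` (junk value `0` if there are no gaps). -/
noncomputable def frob (S : Set ℕ) : ℕ := sSup Sᶜ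

open Classical in
/-- The conductor: one plus the largest gap, and `0` if there are no gaps (so `c(ℕ) = 0`). -/
noncomputable def conductor (S : Set ℕ) : ℕ := if Sᶜ = ∅ then 0 else frob S + 1

/-- The genus: the number of gaps. -/
noncomputable def genus (S : Set ℕ) : ℕ := Sᶜ.ncard

/-- The multiplicity: the smallest positive element. -/
noncomputable def mult (S : Set ℕ) : ℕ := sInf {n : ℕ | n ∈ S ∧ 0 < n}

/-- The jump: the difference between the second and first positive elements. -/
noncomputable def jump (S : Set ℕ) : ℕ := sInf {n : ℕ | n ∈ S ∧ mult S < n} - mult S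

/-- A minimal generator: a positive element of `S` that is not the sum of
two positive elements of `S`. -/
def IsMinGen (S : Set ℕ) (x : ℕ) : Prop :=
  0 < x ∧ x ∈ S ∧ ¬ ∃ a b : ℕ, 0 < a ∧ 0 < b ∧ a ∈ S ∧ b ∈ S ∧ a + b = x

/-- A right generator: a minimal generator larger than the Frobenius number. -/
def IsRightGen (S : Set ℕ) (x : ℕ) : Prop := IsMinGen S x ∧ frob S < x

/-- A strong generator: a right generator `σ` such that `σ + m(S)` is a minimal
generator of `S \ {σ}`. -/
def IsStrongGen (S : Set ℕ) (σ : ℕ) : Prop :=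
  IsRightGen S σ ∧ IsMinGen (S \ {σ}) (σ + mult S)

/-- `S` is ordinary when its gaps are exactly `{1, …, g(S)}`. -/
def IsOrdinary (S : Set ℕ) : Prop := Sᶜ = Set.Icc 1 (genus S)

/-- The left elements: the elements of `S` smaller than the Frobenius number. -/
def leftEls (S : Set ℕ) : Set ℕ := {x : ℕ | x ∈ S ∧ x < frob S}

/-- The gcd of a set of natural numbers. -/
noncomputable def setGcd (A : Set ℕ) : ℕ :=
  sInf {d : ℕ | (∀ a ∈ A, d ∣ a) ∧ ∀ e : ℕ, (∀ a ∈ A, e ∣ a) → e ∣ d}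

/-- `ω(S)`: the gcd of the left elements of `S`. -/
noncomputable def omega' (S : Set ℕ) : ℕ := setGcd (leftEls S)

/-- The shrinking of `S`: the additive submonoid of ℕ generated by the left
elements divided by their gcd. -/
noncomputable def shrink (S : Set ℕ) : Set ℕ :=
  (AddSubmonoid.closure ((fun x => x / omega' S) '' leftEls S) : AddSubmonoid ℕ)

/-- `T` is a descendant of `S`: a numerical semigroup contained in `S` all of whose
missing elements lie beyond the Frobenius number of `S`. -/
def IsDescendant (S T : Set ℕ) : Prop :=
  IsNumSgp T ∧ T ⊆ S ∧ ∀ x ∈ S \ T, frob S < x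

/-- The pseudo-ordinary semigroup `P_{m,u} = {0, m} ∪ {n : n ≥ m + u}`. -/
def P (m u : ℕ) : Set ℕ := {0, m} ∪ {n : ℕ | m + u ≤ n}

/-- The submonoid of ℕ generated by the interval `{a, …, b}`. -/
def intervalSgp (a b : ℕ) : Set ℕ := (AddSubmonoid.closure (Set.Icc a b) : AddSubmonoid ℕ)


/-- In a non-ordinary numerical semigroup, a right generator `σ ≥ c + u` is not strong. -/
theorem stmt2 (Λ : Set ℕ) (h : IsNumSgp Λ) (hord : ¬ IsOrdinary Λ)
    (σ : ℕ) (hσ : IsRightGen Λ σ) (hge : conductor Λ + jump Λ ≤ σ) :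
    ¬ IsStrongGen Λ σ := by
  rintro ⟨-, -, -, hno⟩
  obtain ⟨⟨hσpos, hσmem, -⟩, hFσ⟩ := hσ
  have hcne : Λᶜ ≠ ∅ := by
    intro hc
    apply hord
    have hgen : genus Λ = 0 := by simp [genus, hc]
    rw [IsOrdinary, hgen, hc]
    simp
  have hFc : frob Λ ∈ Λᶜ :=
    Nat.sSup_mem (Set.nonempty_iff_ne_empty.mpr hcne) h.cofinite.bddAbove
  have hbig : ∀ n, frob Λ < n → n ∈ Λ := by
    intro n hn
    by_contra hn'
    exact absurd (le_csSup h.cofinite.bddAbove hn') (not_le.mpr hn)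
  have hm : mult Λ ∈ Λ ∧ 0 < mult Λ := by
    have : (frob Λ + 1) ∈ {n : ℕ | n ∈ Λ ∧ 0 < n} := ⟨hbig _ (lt_add_one _), Nat.succ_pos _⟩
    exact Nat.sInf_mem ⟨_, this⟩
  have hm'set : {n : ℕ | n ∈ Λ ∧ mult Λ < n}.Nonempty :=
    ⟨frob Λ + mult Λ + 1, hbig _ (by omega), by omega⟩
  have hm' : sInf {n : ℕ | n ∈ Λ ∧ mult Λ < n} ∈ Λ ∧
      mult Λ < sInf {n : ℕ | n ∈ Λ ∧ mult Λ < n} := Nat.sInf_mem hm'set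
  set m' := sInf {n : ℕ | n ∈ Λ ∧ mult Λ < n} with hm'def
  have hju : jump Λ = m' - mult Λ := rfl
  have hupos : 0 < jump Λ := by omega
  have hmu : mult Λ + jump Λ = m' := by omega
  have hmF : mult Λ < frob Λ := by
    rcases lt_or_ge (mult Λ) (frob Λ) with h' | h'
    · exact h'
    · exfalso
      apply hord
      have hcomp : Λᶜ = Set.Icc 1 (frob Λ) := by
        ext k
        constructor
        · intro hk
          refine ⟨?_, le_csSup h.cofinite.bddAbove hk⟩
          rcases Nat.eq_zero_or_pos k with rfl | hk1
          · exact absurd h.zero_mem hk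
          · exact hk1
        · rintro ⟨hk1, hk2⟩ hk
          have : mult Λ ≤ k := Nat.sInf_le ⟨hk, by omega⟩
          have hkF : k = frob Λ := by omega
          rw [hkF] at hk
          exact hFc hk
      have hg : genus Λ = frob Λ := by
        rw [genus, hcomp, show Set.Icc 1 (frob Λ) = ↑(Finset.Icc 1 (frob Λ)) by simp,
          Set.ncard_coe_finset, Nat.card_Icc]
        omega
      rw [IsOrdinary, hcomp, hg]
  have hc : conductor Λ = frob Λ + 1 := if_neg hcne
  rw [hc] at hge
  apply hno
  refine ⟨σ - jump Λ, m', by omega, by omega, ⟨hbig _ (by omega), ?_⟩, ⟨hm'.1, ?_⟩, by omega⟩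
  · simp only [Set.mem_singleton_iff]
    omega
  · simp only [Set.mem_singleton_iff]
    omega

end NumSgpPaper
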